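/- Let ν(k) denote the least N such that every regressive coloring of the 2-element subsets of {1,2,...,N} admits a min-homogeneous subset of size k. Then ν eventually dominates every primitive recursive function: for every primitive recursive function g : ℕ → ℕ there exists K such that for all k ≥ K, ν(k) > g(k). -/

import Mathlib

/-- `ν j` is the least `N` such that every regressive coloring of pairs from
`{1,…,N}` has a min-homogeneous subset of size `j`. -/
noncomputable def nu (j : ℕ) : ℕ :=
  sInf {N : ℕ | ∀ c : ℕ → ℕ → ℕ,
    (∀ m n, m ∈ Finset.Icc 1 N → n ∈ Finset.Icc 1 N → m < n → c m n < m) →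
    ∃ B : Finset ℕ, B ⊆ Finset.Icc 1 N ∧ B.card = j ∧
      ∀ m n n', m ∈ B → n ∈ B → n' ∈ B → m < n → m < n' → c m n = c m n'}
namespace NuAux

/-! ### Iterate helpers -/

lemma le_iterate {f : ℕ → ℕ} (hf : ∀ x, x ≤ f x) (d a : ℕ) : a ≤ f^[d] a := by
  induction d with
  | zero => simp
  | succ d ih => rw [Function.iterate_succ_apply']; exact le_trans ih (hf _)

lemma iterate_count_mono {f : ℕ → ℕ} (hf : ∀ x, x ≤ f x) {s t : ℕ} (h : s ≤ t) (a : ℕ) :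
    f^[s] a ≤ f^[t] a := by
  obtain ⟨d, rfl⟩ := Nat.exists_eq_add_of_le h
  rw [Nat.add_comm, Function.iterate_add_apply]
  exact le_iterate hf d _

lemma add_le_iterate {f : ℕ → ℕ} (hf : ∀ x, x < f x) (s a : ℕ) : a + s ≤ f^[s] a := by
  induction s with
  | zero => simp
  | succ s ih =>
    rw [Function.iterate_succ_apply']
    have := hf (f^[s] a)
    omega

/-! ### The hierarchy -/

def Fh (Q : ℕ) : ℕ → ℕ → ℕ
  | 0, a => a + 1
  | j+1, a => (Fh Q j)^[a / Q + 1] a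

lemma Fh_zero (Q a : ℕ) : Fh Q 0 a = a + 1 := rfl

lemma Fh_succ (Q j a : ℕ) : Fh Q (j+1) a = (Fh Q j)^[a / Q + 1] a := rfl

lemma lt_Fh (Q : ℕ) : ∀ j a, a < Fh Q j a := by
  intro j
  induction j with
  | zero => intro a; simp [Fh_zero]
  | succ j ih =>
    intro a
    rw [Fh_succ]
    calc a < Fh Q j a := ih a
    _ = (Fh Q j)^[1] a := rfl
    _ ≤ (Fh Q j)^[a / Q + 1] a := iterate_count_mono (fun x => (ih x).le) (Nat.succ_le_succ (Nat.zero_le _)) a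

lemma Fh_monotone (Q j : ℕ) : Monotone (Fh Q j) := by
  induction j with
  | zero => intro a b h; simp [Fh_zero]; omega
  | succ j ih =>
    intro a b h
    rw [Fh_succ, Fh_succ]
    calc (Fh Q j)^[a / Q + 1] a ≤ (Fh Q j)^[a / Q + 1] b := (ih.iterate _) h
    _ ≤ (Fh Q j)^[b / Q + 1] b :=
        iterate_count_mono (fun x => (lt_Fh Q j x).le)
          (by have := Nat.div_le_div_right (c := Q) h; omega) b

lemma Fh_le_succ (Q j a : ℕ) : Fh Q j a ≤ Fh Q (j+1) a := by
  rw [Fh_succ]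
  calc Fh Q j a = (Fh Q j)^[1] a := rfl
  _ ≤ (Fh Q j)^[a / Q + 1] a := iterate_count_mono (fun x => (lt_Fh Q j x).le) (Nat.succ_le_succ (Nat.zero_le _)) a

lemma Fh_level_mono (Q : ℕ) {j j' : ℕ} (h : j ≤ j') (a : ℕ) : Fh Q j a ≤ Fh Q j' a := by
  induction j' with
  | zero => simp_all
  | succ j' ih =>
    rcases Nat.lt_or_ge j (j'+1) with h' | h'
    · exact le_trans (ih (by omega)) (Fh_le_succ Q j' a)
    · have : j = j' + 1 := le_antisymm h h'
      simp [this]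


/-! ### The coloring -/

def MH (c : ℕ → ℕ → ℕ) (B : Finset ℕ) : Prop :=
  ∀ m n n', m ∈ B → n ∈ B → n' ∈ B → m < n → m < n' → c m n = c m n'

lemma MH.subset {c : ℕ → ℕ → ℕ} {B B' : Finset ℕ} (h : B' ⊆ B) (hm : MH c B) : MH c B' :=
  fun m n n' hm' hn hn' h1 h2 => hm m n n' (h hm') (h hn) (h hn') h1 h2

def lvl (K Q m n : ℕ) : ℕ := Nat.findGreatest (fun j => Fh Q j m ≤ n) K

def tc (K Q m n : ℕ) : ℕ := Nat.findGreatest (fun s => (Fh Q (lvl K Q m n))^[s] m ≤ n) n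

def col (K Q m n : ℕ) : ℕ :=
  if tc K Q m n * (K+1) + lvl K Q m n < m then tc K Q m n * (K+1) + lvl K Q m n else 0

lemma col_reg (K Q m n : ℕ) (h : 1 ≤ m) : col K Q m n < m := by
  unfold col; split_ifs with h' <;> omega

lemma lvl_le (K Q m n : ℕ) : lvl K Q m n ≤ K := Nat.findGreatest_le K

lemma Fh_lvl_le {K Q m n : ℕ} (hmn : m < n) : Fh Q (lvl K Q m n) m ≤ n := by
  have h := Nat.findGreatest_spec (P := fun j => Fh Q j m ≤ n) (m := 0) (Nat.zero_le K)
    (by show Fh Q 0 m ≤ n; rw [Fh_zero]; omega)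
  exact h

lemma tc_spec {K Q m n : ℕ} (hmn : m < n) : (Fh Q (lvl K Q m n))^[tc K Q m n] m ≤ n := by
  have h := Nat.findGreatest_spec (P := fun s => (Fh Q (lvl K Q m n))^[s] m ≤ n) (m := 0)
    (Nat.zero_le n) (by simpa using hmn.le)
  exact h

lemma tc_lt {K Q m n : ℕ} (hmn : m < n) (hm1 : 1 ≤ m) : tc K Q m n < n := by
  have h1 := tc_spec (K := K) (Q := Q) hmn
  have h2 := add_le_iterate (f := Fh Q (lvl K Q m n)) (fun x => lt_Fh Q _ x) (tc K Q m n) m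
  omega

lemma tc_max {K Q m n : ℕ} (hmn : m < n) (hm1 : 1 ≤ m) :
    n < (Fh Q (lvl K Q m n))^[tc K Q m n + 1] m := by
  have h := Nat.findGreatest_is_greatest (P := fun s => (Fh Q (lvl K Q m n))^[s] m ≤ n)
    (n := n) (k := tc K Q m n + 1) (Nat.lt_succ_self _) (tc_lt hmn hm1)
  simp only [not_le] at h
  exact h

lemma lvl_max {K Q m n : ℕ} (h : lvl K Q m n < K) : n < Fh Q (lvl K Q m n + 1) m := by
  have h2 := Nat.findGreatest_is_greatest (P := fun j => Fh Q j m ≤ n) (n := K)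
    (k := lvl K Q m n + 1) (Nat.lt_succ_self _) h
  simp only [not_le] at h2
  exact h2

lemma tc_le_div {K Q m n : ℕ} (hmn : m < n) (_hm1 : 1 ≤ m) (hlt : lvl K Q m n < K) :
    tc K Q m n ≤ m / Q := by
  by_contra hcon
  push_neg at hcon
  have h1 : (Fh Q (lvl K Q m n))^[m / Q + 1] m ≤ (Fh Q (lvl K Q m n))^[tc K Q m n] m :=
    iterate_count_mono (fun x => (lt_Fh Q _ x).le) (by omega) m
  have h2 := tc_spec (K := K) (Q := Q) hmn
  have h3 := lvl_max hlt
  rw [Fh_succ] at h3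
  omega

lemma encode_lt {K Q m n : ℕ} (hQ : Q = 2*K+2) (hm : Q ≤ m) (hmn : m < n)
    (hlt : lvl K Q m n < K) : tc K Q m n * (K+1) + lvl K Q m n < m := by
  have h1 : tc K Q m n ≤ m / Q := tc_le_div hmn (by omega) hlt
  have h2 : tc K Q m n * (K+1) ≤ (m / Q) * (K+1) := Nat.mul_le_mul_right _ h1
  have h3 : m / Q = m / 2 / (K+1) := by
    rw [hQ, Nat.div_div_eq_div_mul, show 2*(K+1) = 2*K+2 from by ring]
  have h4 : (m / 2 / (K+1)) * (K+1) ≤ m / 2 := Nat.div_mul_le_self _ _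
  rw [h3] at h2
  omega

lemma col_eq {K Q m n : ℕ} (hQ : Q = 2*K+2) (hm : Q ≤ m) (hmn : m < n)
    (hlt : lvl K Q m n < K) : col K Q m n = tc K Q m n * (K+1) + lvl K Q m n :=
  if_pos (encode_lt hQ hm hmn hlt)

lemma lvl_lt_K {K Q N m n : ℕ} (hN : N + 1 = Fh Q K Q) (hm : Q ≤ m) (hmn : m < n)
    (hn : n ≤ N) : lvl K Q m n < K := by
  have h1 := lvl_le K Q m n
  rcases Nat.lt_or_ge (lvl K Q m n) K with h | h
  · exact h
  · have heq : lvl K Q m n = K := le_antisymm h1 h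
    have h2 := Fh_lvl_le (K := K) (Q := Q) hmn
    rw [heq] at h2
    have h3 : Fh Q K Q ≤ Fh Q K m := Fh_monotone Q K hm
    omega

lemma encode_inj {K t l t' l' : ℕ} (hl : l ≤ K) (hl' : l' ≤ K)
    (h : t*(K+1)+l = t'*(K+1)+l') : t = t' ∧ l = l' := by
  rcases lt_trichotomy t t' with ht | ht | ht
  · exfalso
    have h1 : (t+1)*(K+1) ≤ t'*(K+1) := Nat.mul_le_mul_right _ (by omega)
    have h2 : (t+1)*(K+1) = t*(K+1) + (K+1) := by ring
    omega
  · rw [ht] at h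
    exact ⟨ht, by omega⟩
  · exfalso
    have h1 : (t'+1)*(K+1) ≤ t*(K+1) := Nat.mul_le_mul_right _ (by omega)
    have h2 : (t'+1)*(K+1) = t'*(K+1) + (K+1) := by ring
    omega

lemma Fh_zero_iter (Q s a : ℕ) : (Fh Q 0)^[s] a = a + s := by
  induction s with
  | zero => simp
  | succ s ih => rw [Function.iterate_succ_apply', ih, Fh_zero]; omega


/-! ### The key counting lemma -/

lemma keyC_core (K Q N : ℕ) (hQ : Q = 2*K+2) (hN : N + 1 = Fh Q K Q)
    (B : Finset ℕ) (hBx : ∀ x ∈ B, Q ≤ x ∧ x ≤ N) (hmh : MH (col K Q) B)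
    (hcard : 3 ≤ B.card) :
    ∃ m0 a, m0 ∈ B ∧ a ∈ B ∧ m0 < a ∧ 1 ≤ lvl K Q m0 a ∧
      ∀ x y, x ∈ B.erase m0 → y ∈ B.erase m0 → x < y → lvl K Q x y < lvl K Q m0 a := by
  classical
  have hne : B.Nonempty := Finset.card_pos.mp (by omega)
  set m0 := B.min' hne with hm0def
  have hm0 : m0 ∈ B := B.min'_mem hne
  have hQm0 : Q ≤ m0 := (hBx _ hm0).1
  have hcard' : 2 ≤ (B.erase m0).card := by
    have := B.card_erase_of_mem hm0
    omega
  obtain ⟨a, ha, b, hb, hab⟩ := Finset.one_lt_card.mp (by omega : 1 < (B.erase m0).card)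
  have hmem' : ∀ x ∈ B.erase m0, x ∈ B ∧ m0 < x := by
    intro x hx
    have hxB : x ∈ B := Finset.mem_of_mem_erase hx
    refine ⟨hxB, lt_of_le_of_ne (B.min'_le _ hxB) (Ne.symm (Finset.ne_of_mem_erase hx))⟩
  have haB := hmem' a ha
  -- every element of B.erase m0 has the same lvl/tc data w.r.t. m0
  have hbox : ∀ x ∈ B.erase m0,
      lvl K Q m0 x = lvl K Q m0 a ∧ tc K Q m0 x = tc K Q m0 a ∧
      (Fh Q (lvl K Q m0 a))^[tc K Q m0 a] m0 ≤ x ∧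
      x < (Fh Q (lvl K Q m0 a))^[tc K Q m0 a + 1] m0 := by
    intro x hx
    have hxB := hmem' x hx
    have hxN := (hBx _ hxB.1).2
    have haN := (hBx _ haB.1).2
    have hcoleq : col K Q m0 x = col K Q m0 a :=
      hmh m0 x a hm0 hxB.1 haB.1 hxB.2 haB.2
    have hlx : lvl K Q m0 x < K := lvl_lt_K hN hQm0 hxB.2 hxN
    have hla : lvl K Q m0 a < K := lvl_lt_K hN hQm0 haB.2 haN
    rw [col_eq hQ hQm0 hxB.2 hlx, col_eq hQ hQm0 haB.2 hla] at hcoleq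
    obtain ⟨hteq, hleq⟩ := encode_inj (lvl_le K Q m0 x) (lvl_le K Q m0 a) hcoleq
    have hlow := tc_spec (K := K) (Q := Q) hxB.2
    have hhigh := tc_max (K := K) (Q := Q) hxB.2 (by omega)
    rw [hleq, hteq] at hlow hhigh
    exact ⟨hleq, hteq, hlow, hhigh⟩
  have hl1 : 1 ≤ lvl K Q m0 a := by
    by_contra hcon
    have hl0 : lvl K Q m0 a = 0 := by omega
    have hA := hbox a ha
    have hB' := hbox b hb
    rw [hl0] at hA hB'
    rw [Fh_zero_iter, Fh_zero_iter] at hA hB'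
    omega
  refine ⟨m0, a, hm0, haB.1, haB.2, hl1, ?_⟩
  intro x y hx hy hxy
  have hxd := hbox x hx
  have hyd := hbox y hy
  have h5 : (Fh Q (lvl K Q m0 a))^[tc K Q m0 a + 1] m0 ≤ Fh Q (lvl K Q m0 a) x := by
    rw [Function.iterate_succ_apply']
    exact Fh_monotone Q _ hxd.2.2.1
  by_contra hge
  push_neg at hge
  have h6 : Fh Q (lvl K Q m0 a) x ≤ Fh Q (lvl K Q x y) x := Fh_level_mono Q hge x
  have h7 : Fh Q (lvl K Q x y) x ≤ y := Fh_lvl_le hxy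
  have := hyd.2.2.2
  omega

lemma keyC (K Q N : ℕ) (hQ : Q = 2*K+2) (hN : N + 1 = Fh Q K Q) :
    ∀ (L : ℕ) (B : Finset ℕ), (∀ x ∈ B, Q ≤ x ∧ x ≤ N) → MH (col K Q) B →
      (∀ m n, m ∈ B → n ∈ B → m < n → lvl K Q m n ≤ L) → B.card ≤ L + 2 := by
  intro L
  induction L with
  | zero =>
    intro B hBx hmh hlv
    by_contra hcon
    obtain ⟨m0, a, hm0B, haB, hlt, hl1, _⟩ :=
      keyC_core K Q N hQ hN B hBx hmh (by omega)
    have := hlv m0 a hm0B haB hlt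
    omega
  | succ L ih =>
    intro B hBx hmh hlv
    rcases Nat.lt_or_ge B.card 3 with h3 | h3
    · omega
    obtain ⟨m0, a, hm0B, haB, hlt, hl1, hsmall⟩ :=
      keyC_core K Q N hQ hN B hBx hmh h3
    have hla : lvl K Q m0 a ≤ L + 1 := hlv m0 a hm0B haB hlt
    have herase := ih (B.erase m0)
      (fun x hx => hBx x (Finset.mem_of_mem_erase hx))
      (hmh.subset (B.erase_subset m0))
      (fun m n hm hn hmn => by have := hsmall m n hm hn hmn; omega)
    have := B.card_erase_of_mem hm0B
    omega

lemma card_bound (K Q N : ℕ) (hQ : Q = 2*K+2) (hK : 1 ≤ K) (hN : N + 1 = Fh Q K Q)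
    (B : Finset ℕ) (hB : B ⊆ Finset.Icc 1 N) (hmh : MH (col K Q) B) :
    B.card ≤ 3*K + 2 := by
  classical
  have hsplit := Finset.card_filter_add_card_filter_not (s := B)
    (p := fun x => x < Q)
  have h1 : (B.filter (fun x => x < Q)).card ≤ 2*K + 1 := by
    have hsub : B.filter (fun x => x < Q) ⊆ Finset.Icc 1 (Q - 1) := by
      intro x hx
      rw [Finset.mem_filter] at hx
      have := Finset.mem_Icc.mp (hB hx.1)
      rw [Finset.mem_Icc]
      omega
    calc (B.filter (fun x => x < Q)).card ≤ (Finset.Icc 1 (Q-1)).card :=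
        Finset.card_le_card hsub
    _ = Q - 1 + 1 - 1 := Nat.card_Icc 1 (Q-1)
    _ ≤ 2*K + 1 := by omega
  have h2 : (B.filter (fun x => ¬ x < Q)).card ≤ K + 1 := by
    have := keyC K Q N hQ hN (K-1) (B.filter (fun x => ¬ x < Q))
      (fun x hx => by
        rw [Finset.mem_filter] at hx
        have := Finset.mem_Icc.mp (hB hx.1)
        omega)
      (hmh.subset (B.filter_subset _))
      (fun m n hm hn hmn => by
        rw [Finset.mem_filter] at hm hn
        have hmQ : Q ≤ m := by omega
        have hnN : n ≤ N := (Finset.mem_Icc.mp (hB hn.1)).2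
        have := lvl_lt_K hN hmQ hmn hnN
        omega)
    omega
  omega


/-! ### Upper bound: the set is nonempty -/

def SSet (k : ℕ) : Set ℕ := {N : ℕ | ∀ c : ℕ → ℕ → ℕ,
    (∀ m n, m ∈ Finset.Icc 1 N → n ∈ Finset.Icc 1 N → m < n → c m n < m) →
    ∃ B : Finset ℕ, B ⊆ Finset.Icc 1 N ∧ B.card = k ∧
      ∀ m n n', m ∈ B → n ∈ B → n' ∈ B → m < n → m < n' → c m n = c m n'}

lemma exists_mh_infinite (c : ℕ → ℕ → ℕ) (hreg : ∀ m n, 1 ≤ m → m < n → c m n < m) :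
    ∀ (k : ℕ) (A : Set ℕ), A.Infinite → (∀ x ∈ A, 1 ≤ x) →
      ∃ B : Finset ℕ, ↑B ⊆ A ∧ B.card = k ∧ MH c B := by
  intro k
  induction k with
  | zero =>
    intro A _ _
    exact ⟨∅, by simp, rfl, fun m n n' hm => by simp at hm⟩
  | succ k ih =>
    intro A hA hA1
    have hne : A.Nonempty := hA.nonempty
    set a := sInf A with ha
    have haA : a ∈ A := Nat.sInf_mem hne
    have ha1 : 1 ≤ a := hA1 a haA
    have hA1' : (A \ Set.Iic a).Infinite := hA.diff (Set.finite_Iic a)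
    have hlt : ∀ x ∈ A \ Set.Iic a, a < x := by
      intro x hx
      have := hx.2
      simp only [Set.mem_Iic, not_le] at this
      exact this
    have hclass : ∃ v, v < a ∧ {x | x ∈ A \ Set.Iic a ∧ c a x = v}.Infinite := by
      by_contra hcon
      push_neg at hcon
      have hsub : (A \ Set.Iic a) ⊆ ⋃ v ∈ Finset.range a, {x | x ∈ A \ Set.Iic a ∧ c a x = v} := by
        intro x hx
        have hcv := hreg a x ha1 (hlt x hx)
        simp only [Set.mem_iUnion, Finset.mem_range]
        exact ⟨c a x, hcv, hx, rfl⟩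
      have hfin : (⋃ v ∈ Finset.range a, {x | x ∈ A \ Set.Iic a ∧ c a x = v}).Finite := by
        apply Set.Finite.biUnion (Finset.range a).finite_toSet
        intro v hv
        rw [Finset.mem_coe, Finset.mem_range] at hv
        exact hcon v hv
      exact hA1' (hfin.subset hsub)
    obtain ⟨v, hv, hinf⟩ := hclass
    obtain ⟨B, hB1, hB2, hB3⟩ := ih _ hinf (fun x hx => hA1 x hx.1.1)
    have haB : a ∉ B := fun hcon => absurd (hlt a (hB1 hcon).1) (lt_irrefl a)
    refine ⟨insert a B, ?_, ?_, ?_⟩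
    · intro x hx
      rw [Finset.coe_insert, Set.mem_insert_iff] at hx
      rcases hx with rfl | hx
      · exact haA
      · exact (hB1 hx).1.1
    · rw [Finset.card_insert_of_notMem haB, hB2]
    · intro m n n' hm hn hn' h1 h2
      rcases Finset.mem_insert.mp hm with heq | hmB
      · have hnB : n ∈ B := by
          rcases Finset.mem_insert.mp hn with heq' | h
          · omega
          · exact h
        have hnB' : n' ∈ B := by
          rcases Finset.mem_insert.mp hn' with heq' | h
          · omega
          · exact h
        rw [heq, (hB1 hnB).2, (hB1 hnB').2]
      · have hma : a < m := hlt m (hB1 hmB).1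
        have hnB : n ∈ B := by
          rcases Finset.mem_insert.mp hn with heq | h
          · omega
          · exact h
        have hnB' : n' ∈ B := by
          rcases Finset.mem_insert.mp hn' with heq | h
          · omega
          · exact h
        exact hB3 m n n' hmB hnB hnB' h1 h2

lemma SSet_nonempty (k : ℕ) : (SSet k).Nonempty := by
  classical
  by_contra hS
  rw [Set.not_nonempty_iff_eq_empty] at hS
  have hbad : ∀ N, ∃ c : ℕ → ℕ → ℕ,
      (∀ m n, m ∈ Finset.Icc 1 N → n ∈ Finset.Icc 1 N → m < n → c m n < m) ∧
      ∀ B : Finset ℕ, ¬(B ⊆ Finset.Icc 1 N ∧ B.card = k ∧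
        ∀ m n n', m ∈ B → n ∈ B → n' ∈ B → m < n → m < n' → c m n = c m n') := by
    intro N
    have hN : ¬ (N ∈ SSet k) := by rw [hS]; exact Set.notMem_empty N
    rw [SSet, Set.mem_setOf_eq] at hN
    push_neg at hN
    obtain ⟨c, hc1, hc2⟩ := hN
    refine ⟨c, hc1, fun B hB => ?_⟩
    obtain ⟨h1, h2, h3⟩ := hB
    obtain ⟨m, n, n', hm, hn, hn', hl1, hl2, hne⟩ := hc2 B h1 h2
    exact hne (h3 m n n' hm hn hn' hl1 hl2)
  choose cN hreg hnomh using hbad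
  set U : Ultrafilter ℕ := Filter.hyperfilter ℕ with hU
  have hcof : ∀ s : Set ℕ, sᶜ.Finite → s ∈ U :=
    fun s hs => Filter.mem_hyperfilter_of_finite_compl hs
  have hex : ∀ m n, 1 ≤ m → m < n → ∃ v, v < m ∧ {N | cN N m n = v} ∈ U := by
    intro m n h1 hmn
    by_contra hno
    push_neg at hno
    have hS1 : {N | n < N} ∈ U := hcof _ (by
      apply Set.Finite.subset (Set.finite_Iic n)
      intro x hx
      simp only [Set.mem_compl_iff, Set.mem_setOf_eq, not_lt] at hx
      exact hx)
    have hT : (⋂ v ∈ Finset.range m, {N | cN N m n ≠ v}) ∈ U := by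
      rw [← Ultrafilter.mem_coe, Filter.biInter_finset_mem]
      intro v hv
      have h5 : {N | cN N m n = v}ᶜ ∈ U := Ultrafilter.compl_mem_iff_notMem.mpr
        (hno v (Finset.mem_range.mp hv))
      simpa [Set.compl_setOf] using h5
    obtain ⟨N, hN1, hN2⟩ := Ultrafilter.nonempty_of_mem (Filter.inter_mem hS1 hT)
    have hN1' : n < N := hN1
    have hcv : cN N m n < m := hreg N m n (Finset.mem_Icc.mpr ⟨h1, by omega⟩)
      (Finset.mem_Icc.mpr ⟨by omega, by omega⟩) hmn
    have := Set.mem_iInter₂.mp hN2 (cN N m n) (Finset.mem_range.mpr hcv)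
    exact this rfl
  have hex' : ∀ m n, ∃ v, 1 ≤ m → m < n → (v < m ∧ {N | cN N m n = v} ∈ U) := by
    intro m n
    by_cases h : 1 ≤ m ∧ m < n
    · obtain ⟨v, hv⟩ := hex m n h.1 h.2
      exact ⟨v, fun _ _ => hv⟩
    · exact ⟨0, fun h1 h2 => absurd ⟨h1, h2⟩ h⟩
  choose cl hcl using hex'
  have hclreg : ∀ m n, 1 ≤ m → m < n → cl m n < m := fun m n h1 h2 => (hcl m n h1 h2).1
  obtain ⟨B, hB1, hB2, hB3⟩ := exists_mh_infinite cl hclreg k (Set.Ici 1)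
    (Set.Ici_infinite 1) (fun x hx => hx)
  have hB1' : ∀ x ∈ B, 1 ≤ x := fun x hx => hB1 hx
  have hGpairs : (⋂ m ∈ B, ⋂ n ∈ B, {N | m < n → cN N m n = cl m n}) ∈ U := by
    rw [← Ultrafilter.mem_coe, Filter.biInter_finset_mem]
    intro m hm
    rw [Filter.biInter_finset_mem]
    intro n hn
    by_cases hmn : m < n
    · have := (hcl m n (hB1' m hm) hmn).2
      apply Filter.mem_of_superset this
      intro N hN
      exact fun _ => hN
    · have : {N | m < n → cN N m n = cl m n} = Set.univ := by
        ext N; simp [hmn]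
      rw [this]
      exact Filter.univ_mem
  have hGbig : {N | ∀ x ∈ B, x ≤ N} ∈ U := by
    apply hcof
    apply Set.Finite.subset (Set.finite_Iio (B.sup id))
    intro N hN
    simp only [Set.mem_compl_iff, Set.mem_setOf_eq, not_forall] at hN
    obtain ⟨x, hx, hxN⟩ := hN
    have : x ≤ B.sup id := Finset.le_sup (f := id) hx
    simp only [Set.mem_Iio]
    omega
  obtain ⟨N, hNb, hNp⟩ := Ultrafilter.nonempty_of_mem (Filter.inter_mem hGbig hGpairs)
  apply hnomh N B
  refine ⟨?_, hB2, ?_⟩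
  · intro x hx
    rw [Finset.mem_Icc]
    exact ⟨hB1' x hx, hNb x hx⟩
  · intro m n n' hm hn hn' h1 h2
    have e1 : cN N m n = cl m n := Set.mem_iInter₂.mp (Set.mem_iInter₂.mp hNp m hm) n hn h1
    have e2 : cN N m n' = cl m n' := Set.mem_iInter₂.mp (Set.mem_iInter₂.mp hNp m hm) n' hn' h2
    rw [e1, e2]
    exact hB3 m n n' hm hn hn' h1 h2


/-! ### Growth lemmas -/

lemma iter_dom {f g : ℕ → ℕ} (A : ℕ) (hgmono : Monotone g) (hf : ∀ x, x ≤ f x)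
    (hdom : ∀ x, A ≤ x → g x ≤ f x) :
    ∀ s a, A ≤ a → g^[s] a ≤ f^[s] a := by
  intro s
  induction s with
  | zero => intro a _; simp
  | succ s ih =>
    intro a ha
    rw [Function.iterate_succ_apply', Function.iterate_succ_apply']
    calc g (g^[s] a) ≤ g (f^[s] a) := hgmono (ih a ha)
    _ ≤ f (f^[s] a) := hdom _ (le_trans ha (le_iterate hf s a))

lemma Fh_exp (Q : ℕ) (hQ : 1 ≤ Q) : ∀ j a, Q ≤ a → a + 2^j ≤ Fh Q j a := by
  intro j
  induction j with
  | zero => intro a _; rw [Fh_zero]; simp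
  | succ j ih =>
    intro a ha
    rw [Fh_succ]
    have hc : 2 ≤ a / Q + 1 := by
      have : 1 ≤ a / Q := (Nat.one_le_div_iff (by omega)).mpr ha
      omega
    have h2 : (Fh Q j)^[2] a ≤ (Fh Q j)^[a / Q + 1] a :=
      iterate_count_mono (fun x => (lt_Fh Q j x).le) hc a
    have h3 : (Fh Q j)^[2] a = Fh Q j (Fh Q j a) := by
      rw [show (2:ℕ) = 1 + 1 from rfl, Function.iterate_add_apply, Function.iterate_one]
    have h4 : a + 2^j ≤ Fh Q j a := ih a ha
    have h5 : Fh Q j a + 2^j ≤ Fh Q j (Fh Q j a) := ih _ (le_trans ha (lt_Fh Q j a).le)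
    have hp : 2^(j+1) = 2^j + 2^j := by rw [pow_succ]; ring
    omega

lemma ack_succ_iterate (j : ℕ) : ∀ a, ack (j+1) a = (ack j)^[a] (ack j 1) := by
  intro a
  induction a with
  | zero => rw [ack_succ_zero]; rfl
  | succ a ih => rw [ack_succ_succ, ih, Function.iterate_succ_apply']

lemma div_sq {Q a : ℕ} (hQ : 1 ≤ Q) (ha : Q*Q ≤ a) : a ≤ (a/Q+1)*(a/Q+1) := by
  have h1 : a < (a/Q+1)*Q := by
    have h2 := Nat.div_add_mod a Q
    have h3 : a % Q < Q := Nat.mod_lt a (by omega)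
    have h4 : (a/Q+1)*Q = Q*(a/Q) + Q := by ring
    omega
  have h5 : Q ≤ a/Q := (Nat.le_div_iff_mul_le (by omega)).mpr ha
  have h6 : (a/Q+1)*Q ≤ (a/Q+1)*(a/Q) := Nat.mul_le_mul_left _ h5
  have h7 : (a/Q+1)*(a/Q) ≤ (a/Q+1)*(a/Q+1) := Nat.mul_le_mul_left _ (by omega)
  omega

lemma growth : ∀ i : ℕ, ∃ C, ∀ Q, 1 ≤ Q → ∀ a, Q*Q + C ≤ a → ack i a ≤ Fh Q (2*i+1) a := by
  intro i
  induction i with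
  | zero =>
    refine ⟨0, fun Q hQ a ha => ?_⟩
    rw [ack_zero]
    calc a + 1 = a + 2^0 := by norm_num
    _ ≤ Fh Q 0 a := by rw [Fh_zero]; norm_num
    _ ≤ Fh Q 1 a := Fh_le_succ Q 0 a
  | succ j ih =>
    obtain ⟨C, hC⟩ := ih
    refine ⟨C + ack j 1 + 1, fun Q hQ a ha => ?_⟩
    have hackmono : Monotone (ack j) := (ack_strictMono_right j).monotone
    have hackle : ∀ x, x ≤ ack j x := fun x => (lt_ack_right j x).le
    have haQ : Q*Q + C ≤ a := by omega
    -- one level up : Fh (2j+2) dominates iterated ack j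
    have hlevel1 : ∀ y, Q*Q + C ≤ y → (ack j)^[y/Q+1] y ≤ Fh Q (2*j+2) y := by
      intro y hy
      rw [Fh_succ]
      exact iter_dom (Q*Q + C) hackmono (fun x => (lt_Fh Q _ x).le)
        (fun x hx => hC Q hQ x hx) (y/Q+1) y hy
    -- accumulate
    have hacc : ∀ s, (ack j)^[s * (a/Q+1)] a ≤ (Fh Q (2*j+2))^[s] a := by
      intro s
      induction s with
      | zero => simp
      | succ s ihs =>
        have hX : a ≤ (Fh Q (2*j+2))^[s] a := le_iterate (fun x => (lt_Fh Q _ x).le) s a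
        have h2 : (ack j)^[((Fh Q (2*j+2))^[s] a)/Q+1] ((Fh Q (2*j+2))^[s] a)
            ≤ Fh Q (2*j+2) ((Fh Q (2*j+2))^[s] a) := hlevel1 _ (by omega)
        calc (ack j)^[(s+1) * (a/Q+1)] a = (ack j)^[(a/Q+1) + s * (a/Q+1)] a := by ring_nf
        _ = (ack j)^[a/Q+1] ((ack j)^[s * (a/Q+1)] a) := Function.iterate_add_apply _ _ _ _
        _ ≤ (ack j)^[a/Q+1] ((Fh Q (2*j+2))^[s] a) := (hackmono.iterate _) ihs
        _ ≤ (ack j)^[((Fh Q (2*j+2))^[s] a)/Q+1] ((Fh Q (2*j+2))^[s] a) :=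
            iterate_count_mono hackle (by
              have := Nat.div_le_div_right (c := Q) hX
              omega) _
        _ ≤ Fh Q (2*j+2) ((Fh Q (2*j+2))^[s] a) := h2
        _ = (Fh Q (2*j+2))^[s+1] a := (Function.iterate_succ_apply' _ _ _).symm
    have hsq : a ≤ (a/Q+1)*(a/Q+1) := div_sq hQ (by omega)
    have hfinal : (ack j)^[(a/Q+1) * (a/Q+1)] a ≤ Fh Q (2*j+3) a := by
      have := hacc (a/Q+1)
      rw [Fh_succ]
      exact this
    calc ack (j+1) a = (ack j)^[a] (ack j 1) := ack_succ_iterate j a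
    _ ≤ (ack j)^[a] a := (hackmono.iterate a) (by omega)
    _ ≤ (ack j)^[(a/Q+1) * (a/Q+1)] a := iterate_count_mono hackle hsq a
    _ ≤ Fh Q (2*j+3) a := hfinal
    _ = Fh Q (2*(j+1)+1) a := by ring_nf

lemma cube_le_pow : ∀ M : ℕ, (M+12)^3 ≤ 2^(M+11) := by
  intro M
  induction M with
  | zero => norm_num
  | succ M ih =>
    have h1 : (M+1+12)^3 ≤ 2*(M+12)^3 := by nlinarith [sq_nonneg (M+12), M.zero_le]
    have h2 : 2*(M+12)^3 ≤ 2*2^(M+11) := by omega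
    have h3 : (2:ℕ)*2^(M+11) = 2^(M+1+11) := by rw [pow_succ]; ring
    omega

end NuAux

lemma nu_eq (k : ℕ) : nu k = sInf (NuAux.SSet k) := rfl

theorem nu_dominates_primrec (g : ℕ → ℕ) (hg : Nat.Primrec g) :
    ∃ K : ℕ, ∀ k ≥ K, g k < nu k := by
  obtain ⟨i, hi⟩ := exists_lt_ack_of_nat_primrec hg
  obtain ⟨C, hC⟩ := NuAux.growth i
  refine ⟨4*(C + 2*i + 45), fun k hk => ?_⟩
  set K := k/4 with hKdef
  have hKbig : C + 2*i + 45 ≤ K := by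
    calc C + 2*i + 45 = (4*(C+2*i+45))/4 := by omega
    _ ≤ k/4 := Nat.div_le_div_right hk
  set Q := 2*K+2 with hQdef
  have hQ1 : 1 ≤ Q := by omega
  have hltF := NuAux.lt_Fh Q K Q
  set N := NuAux.Fh Q K Q - 1 with hNdef
  have hN : N + 1 = NuAux.Fh Q K Q := by omega
  have hnotin : ∀ M, M ≤ N → M ∉ NuAux.SSet k := by
    intro M hM hmem
    obtain ⟨B, hB1, hB2, hB3⟩ := hmem (NuAux.col K Q)
      (fun m n hm _ _ => NuAux.col_reg K Q m n (Finset.mem_Icc.mp hm).1)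
    have hBN : B ⊆ Finset.Icc 1 N := hB1.trans (Finset.Icc_subset_Icc_right hM)
    have hcb := NuAux.card_bound K Q N hQdef (by omega) hN B hBN hB3
    omega
  have hne := NuAux.SSet_nonempty k
  have hmem := Nat.sInf_mem hne
  have hgt : N < sInf (NuAux.SSet k) := by
    by_contra hle
    push_neg at hle
    exact hnotin _ hle hmem
  obtain ⟨K', hKK⟩ : ∃ K', K = K' + 1 := ⟨K-1, by omega⟩
  have hsplit : NuAux.Fh Q K Q = NuAux.Fh Q K' (NuAux.Fh Q K' Q) := by
    rw [hKK, NuAux.Fh_succ, Nat.div_self (show 0 < Q by omega),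
      Function.iterate_add_apply, Function.iterate_one]
  have hbexp : Q + 2^K' ≤ NuAux.Fh Q K' Q := NuAux.Fh_exp Q hQ1 K' Q (le_refl Q)
  have hcube : (K'+1)^3 ≤ 2^K' := by
    obtain ⟨M, hM⟩ : ∃ M, K' = M + 11 := ⟨K' - 11, by omega⟩
    have h0 := NuAux.cube_le_pow M
    rw [hM, show M+11+1 = M+12 from by omega]
    exact h0
  have hnum : Q*Q + C + k ≤ 2^K' := by
    have hk4 : k ≤ 4*K + 3 := by omega
    have h44 : 44 ≤ K' := by omega
    have hCK : C ≤ K' := by omega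
    have hQ' : Q = 2*K'+4 := by omega
    have hk' : k ≤ 4*K'+7 := by omega
    have hp1 : 44*(K'*K') ≤ K'*(K'*K') := Nat.mul_le_mul_right _ h44
    have hp2 : 44*K' ≤ K'*K' := Nat.mul_le_mul_right _ h44
    have h1 : Q*Q + C + k ≤ (K'+1)^3 := by
      rw [hQ']
      nlinarith [hp1, hp2, h44, hCK, hk']
    omega
  have hack : ack i k ≤ NuAux.Fh Q K Q := by
    rw [hsplit]
    have h1 : ack i k ≤ ack i (NuAux.Fh Q K' Q) :=
      (ack_strictMono_right i).monotone (by omega)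
    have h2 : ack i (NuAux.Fh Q K' Q) ≤ NuAux.Fh Q (2*i+1) (NuAux.Fh Q K' Q) :=
      hC Q hQ1 _ (by omega)
    have h3 : NuAux.Fh Q (2*i+1) (NuAux.Fh Q K' Q) ≤ NuAux.Fh Q K' (NuAux.Fh Q K' Q) :=
      NuAux.Fh_level_mono Q (by omega) _
    omega
  have hfin : g k < ack i k := hi k
  have hnu : nu k = sInf (NuAux.SSet k) := rfl
  omega
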